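/- Define for a nondecreasing function f↑ : {1,...,n} → {1,...,n} the function Park(f↑) by Park(f↑)(1) = 1 and Park(f↑)(j) = min(Park(f↑)(j-1) + f↑(j) - f↑(j-1), j) for j > 1. Then for any parking function f = f↑ ∘ σ with σ a permutation: (a) f(i) = f(j) iff Park(f)(i) = Park(f)(j), and (b) f(i) < f(j) iff Park(f)(i) < Park(f)(j), where Park(f) := Park(f↑) ∘ σ. -/
import Mathlib


/-- `Park` of a nondecreasing function (0-indexed values):
`Park(g)(0) = 0`, `Park(g)(j) = min(Park(g)(j-1) + g(j) - g(j-1), j)`. -/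
def parkMono (g : ℕ → ℕ) : ℕ → ℕ
  | 0 => 0
  | j + 1 => min (parkMono g j + (g (j + 1) - g j)) (j + 1)

/-- Extension of `f : Fin n → Fin n` to an ℕ-valued function. -/
def extVal {n : ℕ} (f : Fin n → Fin n) : ℕ → ℕ :=
  fun k => if h : k < n then (f ⟨k, h⟩ : ℕ) else 0

lemma parkMono_le (g : ℕ → ℕ) : ∀ k, parkMono g k ≤ k
  | 0 => le_refl 0
  | k + 1 => by simp [parkMono]

lemma extVal_eq {n : ℕ} (g : Fin n → Fin n) (a : Fin n) :
    extVal g (a : ℕ) = (g a : ℕ) := by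
  simp [extVal, a.isLt]

lemma park_chain (n : ℕ) (g : Fin n → Fin n) (hmono : Monotone g) :
    ∀ a b : ℕ, a ≤ b → b < n →
      (parkMono (extVal g) a ≤ parkMono (extVal g) b) ∧
      (extVal g a < extVal g b → parkMono (extVal g) a < parkMono (extVal g) b) ∧
      (extVal g a = extVal g b → parkMono (extVal g) a = parkMono (extVal g) b) := by
  intro a b hab
  induction b, hab using Nat.le_induction with
  | base => intro _; exact ⟨le_refl _, fun h => absurd rfl (ne_of_lt h), fun _ => rfl⟩
  | succ b hab ih =>
    intro hb1
    have hb : b < n := by omega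
    obtain ⟨h1, h2, h3⟩ := ih hb
    -- facts about the step from b to b+1
    have hG : extVal g b ≤ extVal g (b + 1) := by
      have := hmono (show (⟨b, hb⟩ : Fin n) ≤ ⟨b + 1, hb1⟩ by simp [Fin.le_def])
      simpa [extVal, hb, hb1] using this
    have hGa : extVal g a ≤ extVal g b := by
      have := hmono (show (⟨a, by omega⟩ : Fin n) ≤ ⟨b, hb⟩ by simp [Fin.le_def]; omega)
      simpa [extVal, show a < n by omega, hb] using this
    have hPb : parkMono (extVal g) b ≤ b := parkMono_le _ b
    have hstep : parkMono (extVal g) (b + 1) =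
        min (parkMono (extVal g) b + (extVal g (b + 1) - extVal g b)) (b + 1) := rfl
    rcases eq_or_lt_of_le hG with heq | hlt
    · have : parkMono (extVal g) (b + 1) = parkMono (extVal g) b := by
        rw [hstep, ← heq]; omega
      refine ⟨by omega, fun h => ?_, fun h => ?_⟩
      · exact this ▸ h2 (by omega)
      · exact (this ▸ h3 (by omega))
    · have : parkMono (extVal g) b < parkMono (extVal g) (b + 1) := by
        rw [hstep]; omega
      refine ⟨by omega, fun _ => by omega, fun h => ?_⟩
      · omega

lemma park_key (n : ℕ) (g : Fin n → Fin n) (hmono : Monotone g) (a b : Fin n) :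
    ((g a : ℕ) = (g b : ℕ) ↔ parkMono (extVal g) a = parkMono (extVal g) b) ∧
    ((g a : ℕ) < (g b : ℕ) ↔ parkMono (extVal g) a < parkMono (extVal g) b) := by
  -- forward implications for ordered pairs
  have fwd : ∀ x y : Fin n,
      ((g x : ℕ) = g y → parkMono (extVal g) x = parkMono (extVal g) y) ∧
      ((g x : ℕ) < g y → parkMono (extVal g) x < parkMono (extVal g) y) := by
    intro x y
    constructor
    · intro h
      rcases le_total (x : ℕ) (y : ℕ) with hxy | hxy
      · exact (park_chain n g hmono x y hxy y.isLt).2.2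
          (by rw [extVal_eq, extVal_eq]; exact h)
      · exact ((park_chain n g hmono y x hxy x.isLt).2.2
          (by rw [extVal_eq, extVal_eq]; exact h.symm)).symm
    · intro h
      have hxy : (x : ℕ) ≤ (y : ℕ) := by
        by_contra hc
        push_neg at hc
        exact absurd h (not_lt.mpr (hmono (Fin.le_def.mpr (le_of_lt hc))))
      exact (park_chain n g hmono x y hxy y.isLt).2.1
        (by rw [extVal_eq, extVal_eq]; exact h)
  constructor
  · constructor
    · exact (fwd a b).1
    · intro h
      rcases lt_trichotomy ((g a : ℕ)) ((g b : ℕ)) with hc | hc | hc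
      · exact absurd h (ne_of_lt ((fwd a b).2 hc))
      · exact hc
      · exact absurd h.symm (ne_of_lt ((fwd b a).2 hc))
  · constructor
    · exact (fwd a b).2
    · intro h
      rcases lt_trichotomy ((g a : ℕ)) ((g b : ℕ)) with hc | hc | hc
      · exact hc
      · exact absurd h (by rw [(fwd a b).1 hc]; exact lt_irrefl _)
      · exact absurd ((fwd b a).2 hc) (not_lt.mpr (le_of_lt h))

/-- For a parking function `f = f↑ ∘ σ` (with `f↑ = g` nondecreasing, `g(i) ≤ i`,
`σ` a permutation) and `Park(f) := Park(f↑) ∘ σ`: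
(a) `f(i) = f(j)` iff `Park(f)(i) = Park(f)(j)`, and
(b) `f(i) < f(j)` iff `Park(f)(i) < Park(f)(j)`. -/
theorem park_preserves_relative_order (n : ℕ) (g : Fin n → Fin n)
    (σ : Equiv.Perm (Fin n)) (hmono : Monotone g)
    (hpark : ∀ i : Fin n, (g i : ℕ) ≤ (i : ℕ)) :
    ∀ i j : Fin n,
      ((g ∘ σ) i = (g ∘ σ) j ↔
        parkMono (extVal g) (σ i) = parkMono (extVal g) (σ j)) ∧
      (((g ∘ σ) i : ℕ) < ((g ∘ σ) j : ℕ) ↔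
        parkMono (extVal g) (σ i) < parkMono (extVal g) (σ j)) := by
  intro i j
  obtain ⟨h1, h2⟩ := park_key n g hmono (σ i) (σ j)
  refine ⟨?_, h2⟩
  simpa [Fin.ext_iff] using h1
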